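/- For all nonnegative integers n and j, ∑_{k=j}^{n} C(n,k)·C(k,j)·(−1)^{n−k}·⟨1⟩_{n−k,λ}·(1)_{k−j,λ} = δ_{n,j}, where δ is the Kronecker delta. -/

import Mathlib

open Finset

noncomputable def dff (lam x : ℝ) (n : ℕ) : ℝ := ∏ i ∈ Finset.range n, (x - i * lam)

noncomputable def drf (lam x : ℝ) (n : ℕ) : ℝ := ∏ i ∈ Finset.range n, (x + i * lam)

lemma dff_zero (lam x : ℝ) : dff lam x 0 = 1 := by simp [dff]

lemma dff_succ (lam x : ℝ) (n : ℕ) : dff lam x (n + 1) = dff lam x n * (x - n * lam) := by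
  simp [dff, Finset.prod_range_succ]

lemma neg_one_pow_drf (lam : ℝ) (m : ℕ) :
    (-1 : ℝ) ^ m * drf lam 1 m = dff lam (-1) m := by
  have h : (-1 : ℝ) ^ m = ∏ _i ∈ Finset.range m, (-1 : ℝ) := by simp
  rw [dff, drf, h, ← Finset.prod_mul_distrib]
  exact Finset.prod_congr rfl (fun i _ => by ring)

lemma dff_vand (lam x y : ℝ) (n : ℕ) :
    dff lam (x + y) n = ∑ k ∈ Finset.range (n + 1),
      (Nat.choose n k : ℝ) * dff lam x k * dff lam y (n - k) := by
  induction n with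
  | zero => simp [dff]
  | succ n ih =>
    rw [dff_succ, ih, Finset.sum_mul]
    have key : ∀ k ∈ Finset.range (n + 1),
        (Nat.choose n k : ℝ) * dff lam x k * dff lam y (n - k) * (x + y - n * lam)
        = (Nat.choose n k : ℝ) * dff lam x (k + 1) * dff lam y (n - k)
          + (Nat.choose n k : ℝ) * dff lam x k * dff lam y (n - k + 1) := by
      intro k hk
      rw [Finset.mem_range] at hk
      rw [dff_succ, dff_succ]
      have : ((n - k : ℕ) : ℝ) = (n : ℝ) - (k : ℝ) := by
        rw [Nat.cast_sub (by omega)]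
      rw [this]
      ring
    rw [Finset.sum_congr rfl key, Finset.sum_add_distrib]
    rw [Finset.sum_range_succ'
      (fun k => (Nat.choose (n+1) k : ℝ) * dff lam x k * dff lam y (n + 1 - k)) (n+1)]
    simp only [Nat.choose_succ_succ', Nat.cast_add, Nat.succ_sub_succ, Nat.choose_zero_right,
      Nat.cast_one, one_mul, Nat.sub_zero, add_mul]
    rw [Finset.sum_add_distrib, add_assoc]
    congr 1
    rw [Finset.sum_range_succ'
      (fun k => (Nat.choose n k : ℝ) * dff lam x k * dff lam y (n - k + 1)) n]
    rw [Finset.sum_range_succ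
      (fun k => (Nat.choose n (k+1) : ℝ) * dff lam x (k+1) * dff lam y (n - k)) n]
    simp only [Nat.choose_succ_self, Nat.cast_zero, zero_mul, add_zero, Nat.choose_zero_right,
      Nat.cast_one, one_mul, Nat.sub_zero]
    congr 1
    apply Finset.sum_congr rfl
    intro k hk
    rw [Finset.mem_range] at hk
    have : n - (k + 1) + 1 = n - k := by omega
    rw [this]

theorem stmt2 (lam : ℝ) (hlam : lam ≠ 0) (n j : ℕ) :
    ∑ k ∈ Finset.Icc j n, (Nat.choose n k : ℝ) * (Nat.choose k j : ℝ) *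
      (-1 : ℝ) ^ (n - k) * drf lam 1 (n - k) * dff lam 1 (k - j)
      = if n = j then 1 else 0 := by
  rcases lt_or_ge n j with h | h
  · rw [Finset.Icc_eq_empty (by omega), Finset.sum_empty, if_neg (by omega)]
  · rw [← Finset.Ico_add_one_right_eq_Icc, Finset.sum_Ico_eq_sum_range]
    have key : ∀ m ∈ Finset.range (n + 1 - j),
        (Nat.choose n (j + m) : ℝ) * (Nat.choose (j + m) j : ℝ) *
          (-1 : ℝ) ^ (n - (j + m)) * drf lam 1 (n - (j + m)) * dff lam 1 (j + m - j)
        = (Nat.choose n j : ℝ) *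
            ((Nat.choose (n - j) m : ℝ) * dff lam 1 m * dff lam (-1) (n - j - m)) := by
      intro m hm
      rw [Finset.mem_range] at hm
      have h1 : n.choose (j + m) * (j + m).choose j = n.choose j * (n - j).choose m := by
        have := Nat.choose_mul (n := n) (show j ≤ j + m by omega)
        simpa using this
      have h2 : n - (j + m) = n - j - m := by omega
      have h3 : j + m - j = m := by omega
      rw [h2, h3, mul_assoc _ _ (drf lam 1 (n - j - m)), neg_one_pow_drf]
      have h1' : (↑(n.choose (j + m)) * ↑((j + m).choose j) : ℝ)
          = ↑(n.choose j) * ↑((n - j).choose m) := by exact_mod_cast h1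
      rw [h1']; ring
    rw [Finset.sum_congr rfl key, ← Finset.mul_sum]
    have hr : n + 1 - j = (n - j) + 1 := by omega
    rw [hr, ← dff_vand lam 1 (-1) (n - j)]
    rcases eq_or_ne n j with he | he
    · simp [he, dff]
    · rw [if_neg he]
      have hnj : 0 < n - j := by omega
      have : dff lam (1 + -1) (n - j) = 0 := by
        rw [show (1 : ℝ) + -1 = 0 by ring, dff]
        apply Finset.prod_eq_zero (Finset.mem_range.mpr hnj)
        simp
      rw [this, mul_zero]
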